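/- Let n ≥ 2 and let G₁, …, Gₙ be independent random variables with P(G_i = t) = 2^{−t} for every integer t ≥ 1 (geometric with parameter 1/2). Then for every integer k ≥ 2·log n, the probability that there exists an integer t with 1 ≤ t ≤ k attained by exactly one of the variables (i.e., exactly one index i satisfies G_i = t) is strictly greater than 1/2. (Theorem 2, part 2, of the paper: when n neighbors of a station v execute Green-Decay(k), this event is exactly the event that v receives the message.) -/

import Mathlib

open Finset

noncomputable section GreenDecayAux

namespace GreenDecayAux

variable {ι : Type*} [Fintype ι] [DecidableEq ι]

/-- truncated geometric weights -/
def q (j t : ℕ) : ℝ := if t ≤ j then (1/2 : ℝ) ^ t else (1/2 : ℝ) ^ j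

lemma q_nonneg (j t : ℕ) : 0 ≤ q j t := by
  unfold q; split <;> positivity

lemma q_one (j : ℕ) : q (j+1) 1 = 1/2 := by
  unfold q; rw [if_pos (by omega)]; ring

lemma q_succ (j t : ℕ) (ht : 1 ≤ t) (ht' : t ≤ j + 1) :
    q (j+1) (t+1) = 1/2 * q j t := by
  unfold q
  rcases le_or_gt t j with h | h
  · rw [if_pos (by omega), if_pos h, pow_succ]; ring
  · rw [if_neg (by omega), if_neg (by omega), pow_succ]; ring

/-- the failure predicate -/
def Bad (s : Finset ι) (j : ℕ) (w : ι → ℕ) : Prop :=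
  ∀ t ∈ Finset.Icc 1 j, ¬ (s.filter fun i => w i = t).card = 1

instance {s : Finset ι} {j : ℕ} : DecidablePred (Bad s j) := fun w => by
  unfold Bad; infer_instance

/-- the set of "failing" level assignments on active set `s` with horizon `j` -/
def WF (s : Finset ι) (j : ℕ) : Finset (ι → ℕ) :=
  (Fintype.piFinset fun i => if i ∈ s then Finset.Icc 1 (j+1) else {0}).filter (Bad s j)

lemma mem_WF {s : Finset ι} {j : ℕ} {w : ι → ℕ} :
    w ∈ WF s j ↔ (∀ i, (i ∈ s → w i ∈ Finset.Icc 1 (j+1)) ∧ (i ∉ s → w i = 0)) ∧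
      ∀ t ∈ Finset.Icc 1 j, ¬ (s.filter fun i => w i = t).card = 1 := by
  unfold WF
  rw [mem_filter, Fintype.mem_piFinset]
  constructor
  · rintro ⟨h1, h2⟩
    refine ⟨fun i => ⟨fun hi => ?_, fun hi => ?_⟩, h2⟩
    · have := h1 i; rwa [if_pos hi] at this
    · have := h1 i; rwa [if_neg hi, mem_singleton] at this
  · rintro ⟨h1, h2⟩
    refine ⟨fun i => ?_, h2⟩
    by_cases hi : i ∈ s
    · rw [if_pos hi]; exact (h1 i).1 hi
    · rw [if_neg hi, mem_singleton]; exact (h1 i).2 hi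

/-- the failure probability sum -/
def Sc (s : Finset ι) (j : ℕ) : ℝ := ∑ w ∈ WF s j, ∏ i ∈ s, q j (w i)

lemma Sc_nonneg (s : Finset ι) (j : ℕ) : 0 ≤ Sc s j := by
  unfold Sc
  exact Finset.sum_nonneg fun w _ => Finset.prod_nonneg fun i _ => q_nonneg _ _

lemma Sc_zero (s : Finset ι) : Sc s 0 = 1 := by
  unfold Sc WF
  rw [Finset.filter_true_of_mem (fun w _ => by intro t ht; simp at ht)]
  have h1 : ∀ w ∈ (Fintype.piFinset fun i =>
      if i ∈ s then Finset.Icc 1 (0+1) else ({0} : Finset ℕ)),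
      ∏ i ∈ s, q 0 (w i) = 1 := by
    intro w hw
    refine Finset.prod_eq_one fun i hi => ?_
    have hw := Fintype.mem_piFinset.1 hw i
    rw [if_pos hi] at hw
    have hwi : w i = 1 := by simp only [Finset.mem_Icc] at hw; omega
    rw [hwi]; unfold q; rw [if_neg (by omega)]; norm_num
  rw [Finset.sum_congr rfl h1, Finset.sum_const, Fintype.card_piFinset]
  have h2 : ∏ i, #(if i ∈ s then Finset.Icc 1 (0+1) else ({0} : Finset ℕ)) = 1 :=
    Finset.prod_eq_one fun i _ => by split <;> simp
  rw [h2]; simp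

lemma Sc_succ (s : Finset ι) (j : ℕ) :
    Sc s (j+1) = ∑ B ∈ s.powerset,
      (if B.card + 1 = s.card then 0 else (1/2 : ℝ) ^ s.card * Sc B j) := by
  classical
  have hmaps : ∀ w ∈ WF s (j+1), (s.filter fun i => ¬ w i = 1) ∈ s.powerset :=
    fun w _ => mem_powerset.2 (filter_subset _ _)
  rw [Sc, ← Finset.sum_fiberwise_of_maps_to hmaps]
  refine Finset.sum_congr rfl fun B hB => ?_
  have hBs : B ⊆ s := mem_powerset.1 hB
  have hcle : B.card ≤ s.card := card_le_card hBs
  by_cases hcard : B.card + 1 = s.card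
  · rw [if_pos hcard]
    refine Finset.sum_eq_zero fun w hw => ?_
    rw [mem_filter] at hw
    obtain ⟨hw1, hfib⟩ := hw
    obtain ⟨hmem, hbad⟩ := mem_WF.1 hw1
    exfalso
    refine hbad 1 (by simp) ?_
    have hcc := Finset.card_filter_add_card_filter_not
      (s := s) (p := fun i => w i = 1)
    rw [hfib] at hcc
    omega
  · rw [if_neg hcard, Sc, Finset.mul_sum]
    refine Finset.sum_nbij' (fun w i => if i ∈ B then w i - 1 else 0)
      (fun w' i => if i ∈ B then w' i + 1 else if i ∈ s then 1 else 0)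
      ?_ ?_ ?_ ?_ ?_
    · -- maps forward
      intro w hw
      rw [mem_filter] at hw
      obtain ⟨hw1, hfib⟩ := hw
      obtain ⟨hmem, hbad⟩ := mem_WF.1 hw1
      have hBmem : ∀ i ∈ B, i ∈ s ∧ ¬ w i = 1 := by
        intro i hi; rw [← hfib] at hi; exact ⟨(mem_filter.1 hi).1, (mem_filter.1 hi).2⟩
      refine mem_WF.2 ⟨fun i => ⟨fun hi => ?_, fun hi => ?_⟩, ?_⟩
      · obtain ⟨his, hne⟩ := hBmem i hi
        have h2 := (hmem i).1 his
        rw [Finset.mem_Icc] at h2 ⊢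
        simp only [if_pos hi]
        omega
      · simp only [if_neg hi]
      · intro t ht hone
        rw [Finset.mem_Icc] at ht
        refine hbad (t+1) (by rw [Finset.mem_Icc]; omega) ?_
        have heq : (s.filter fun i => w i = t + 1) =
            (B.filter fun i => (if i ∈ B then w i - 1 else 0) = t) := by
          ext i
          simp only [mem_filter]
          constructor
          · rintro ⟨his, hit⟩
            have hiB : i ∈ B := by
              rw [← hfib, mem_filter]; exact ⟨his, by omega⟩
            refine ⟨hiB, by simp only [if_pos hiB]; omega⟩
          · rintro ⟨hiB, hit⟩
            obtain ⟨his, hne⟩ := hBmem i hiB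
            have h2 := (hmem i).1 his
            rw [Finset.mem_Icc] at h2
            simp only [if_pos hiB] at hit
            exact ⟨his, by omega⟩
        rw [heq]
        exact hone
    · -- maps backward
      intro w' hw'
      obtain ⟨hmem', hbad'⟩ := mem_WF.1 hw'
      rw [mem_filter]
      constructor
      · refine mem_WF.2 ⟨fun i => ⟨fun hi => ?_, fun hi => ?_⟩, ?_⟩
        · by_cases hiB : i ∈ B
          · have h2 := (hmem' i).1 hiB
            rw [Finset.mem_Icc] at h2 ⊢
            simp only [if_pos hiB]
            omega
          · simp only [if_neg hiB, if_pos hi, Finset.mem_Icc]; omega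
        · have hiB : i ∉ B := fun h => hi (hBs h)
          simp only [if_neg hiB, if_neg hi]
        · intro t ht hone
          rw [Finset.mem_Icc] at ht
          obtain ⟨u, rfl⟩ : ∃ u, t = u + 1 := ⟨t - 1, by omega⟩
          rcases Nat.eq_zero_or_pos u with hu | hu
          · subst hu
            have heq : (s.filter fun i =>
                (if i ∈ B then w' i + 1 else if i ∈ s then 1 else 0) = 0 + 1) = s \ B := by
              ext i
              simp only [mem_filter, mem_sdiff]
              constructor
              · rintro ⟨his, hit⟩
                refine ⟨his, fun hiB => ?_⟩
                have h2 := (hmem' i).1 hiB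
                rw [Finset.mem_Icc] at h2
                simp only [if_pos hiB] at hit
                omega
              · rintro ⟨his, hiB⟩
                simp only [if_neg hiB, if_pos his]
                exact ⟨his, trivial⟩
            rw [heq, card_sdiff_of_subset hBs] at hone
            omega
          · refine hbad' u (by rw [Finset.mem_Icc]; omega) ?_
            have heq : (s.filter fun i =>
                (if i ∈ B then w' i + 1 else if i ∈ s then 1 else 0) = u + 1) =
                (B.filter fun i => w' i = u) := by
              ext i
              simp only [mem_filter]
              constructor
              · rintro ⟨his, hit⟩
                by_cases hiB : i ∈ B
                · simp only [if_pos hiB] at hit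
                  exact ⟨hiB, by omega⟩
                · simp only [if_neg hiB, if_pos his] at hit
                  omega
              · rintro ⟨hiB, hit⟩
                exact ⟨hBs hiB, by simp only [if_pos hiB]; omega⟩
            rw [heq] at hone
            exact hone
      · -- fiber condition
        ext i
        simp only [mem_filter]
        constructor
        · rintro ⟨his, hit⟩
          by_cases hiB : i ∈ B
          · exact hiB
          · simp only [if_neg hiB, if_pos his] at hit
            exact absurd trivial hit
        · intro hiB
          have h2 := (hmem' i).1 hiB
          rw [Finset.mem_Icc] at h2
          exact ⟨hBs hiB, by simp only [if_pos hiB]; omega⟩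
    · -- left inverse
      intro w hw
      dsimp only
      rw [mem_filter] at hw
      obtain ⟨hw1, hfib⟩ := hw
      obtain ⟨hmem, hbad⟩ := mem_WF.1 hw1
      funext i
      by_cases hiB : i ∈ B
      · have his : i ∈ s := hBs hiB
        have h1 := (hmem i).1 his
        have hne : ¬ w i = 1 := by
          rw [← hfib, mem_filter] at hiB; exact hiB.2
        rw [Finset.mem_Icc] at h1
        simp only [if_pos hiB]
        omega
      · simp only [if_neg hiB]
        by_cases his : i ∈ s
        · rw [if_pos his]
          have h3 : i ∉ s.filter fun i => ¬ w i = 1 := by rw [hfib]; exact hiB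
          rw [mem_filter] at h3
          push_neg at h3
          exact (h3 his).symm
        · rw [if_neg his]
          exact ((hmem i).2 his).symm
    · -- right inverse
      intro w' hw'
      dsimp only
      obtain ⟨hmem', hbad'⟩ := mem_WF.1 hw'
      funext i
      by_cases hiB : i ∈ B
      · simp only [if_pos hiB]
        omega
      · simp only [if_neg hiB]
        exact ((hmem' i).2 hiB).symm
    · -- values agree
      intro w hw
      dsimp only
      rw [mem_filter] at hw
      obtain ⟨hw1, hfib⟩ := hw
      obtain ⟨hmem, hbad⟩ := mem_WF.1 hw1
      rw [← Finset.prod_sdiff hBs]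
      have h1 : ∏ i ∈ s \ B, q (j+1) (w i) = (1/2 : ℝ) ^ (s \ B).card := by
        rw [Finset.prod_congr rfl (fun i hi => ?_), Finset.prod_const]
        rw [mem_sdiff] at hi
        have hw1' : w i = 1 := by
          have h3 : i ∉ s.filter fun i => ¬ w i = 1 := by rw [hfib]; exact hi.2
          rw [mem_filter] at h3
          push_neg at h3
          exact h3 hi.1
        rw [hw1']
        exact q_one j
      have h2 : ∏ i ∈ B, q (j+1) (w i) =
          (1/2 : ℝ) ^ B.card * ∏ i ∈ B, q j (if i ∈ B then w i - 1 else 0) := by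
        rw [← Finset.prod_const, ← Finset.prod_mul_distrib]
        refine Finset.prod_congr rfl fun i hiB => ?_
        have his : i ∈ s := hBs hiB
        have hIcc := (hmem i).1 his
        have hne : ¬ w i = 1 := by
          rw [← hfib, mem_filter] at hiB; exact hiB.2
        rw [Finset.mem_Icc] at hIcc
        rw [if_pos hiB, show w i = (w i - 1) + 1 by omega, q_succ j (w i - 1)
          (by omega) (by omega)]
        congr 1
      rw [h1, h2, ← mul_assoc, ← pow_add, card_sdiff_of_subset hBs]
      congr 2
      omega

lemma Sc_empty (j : ℕ) : Sc (∅ : Finset ι) j = 1 := by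
  induction j with
  | zero => exact Sc_zero ∅
  | succ j ih =>
    rw [Sc_succ]
    simp [ih]

lemma Sc_le_one (s : Finset ι) (j : ℕ) : Sc s j ≤ 1 := by
  induction j generalizing s with
  | zero => rw [Sc_zero]
  | succ j ih =>
    rw [Sc_succ]
    calc ∑ B ∈ s.powerset, (if B.card+1 = s.card then 0 else (1/2:ℝ)^s.card * Sc B j)
        ≤ ∑ _B ∈ s.powerset, (1/2:ℝ)^s.card := by
          refine Finset.sum_le_sum fun B hB => ?_
          split
          · positivity
          · have h1 := ih B
            have h2 : (0:ℝ) < (1/2:ℝ)^s.card := by positivity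
            nlinarith [Sc_nonneg B j]
      _ = (2:ℝ)^s.card * (1/2:ℝ)^s.card := by
          rw [Finset.sum_const, card_powerset]
          push_cast
          ring
      _ = 1 := by rw [← mul_pow]; norm_num

lemma Sc_card_one {s : Finset ι} (h : s.card = 1) (j : ℕ) : Sc s j = (1/2:ℝ)^j := by
  induction j with
  | zero => rw [Sc_zero]; norm_num
  | succ j ih =>
    obtain ⟨a, ha⟩ := card_eq_one.1 h
    have ih' : Sc (insert a ∅ : Finset ι) j = (1/2:ℝ)^j := by
      rw [show (insert a ∅ : Finset ι) = {a} from rfl, ← ha]; exact ih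
    rw [Sc_succ, ha, show ({a} : Finset ι) = insert a ∅ from rfl,
      Finset.sum_powerset_insert (notMem_empty a), powerset_empty,
      Finset.sum_singleton, Finset.sum_singleton]
    norm_num [ih', Sc_empty, pow_succ]
    have ih'' : Sc ({a} : Finset ι) j = (1/2:ℝ)^j := by rw [← ha]; exact ih
    rw [ih'']
    ring

/-- first binomial moment -/
lemma sum_choose_mul (m : ℕ) :
    ∑ c ∈ Finset.range (m+1), c * m.choose c = m * 2^(m-1) := by
  cases m with
  | zero => simp
  | succ m =>
    rw [Finset.sum_range_succ']
    have h1 : ∀ i ∈ Finset.range (m+1), (i+1) * (m+1).choose (i+1) = (m+1) * m.choose i := by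
      intro i _
      rw [mul_comm (i+1), ← Nat.add_one_mul_choose_eq]
    rw [Finset.sum_congr rfl h1, ← Finset.mul_sum, Nat.sum_range_choose]
    simp

/-- second falling binomial moment -/
lemma sum_choose_mul2 (m : ℕ) :
    ∑ c ∈ Finset.range (m+3), c * (c-1) * (m+2).choose c = (m+2)*(m+1)*2^m := by
  rw [Finset.sum_range_succ', Finset.sum_range_succ']
  have h1 : ∀ i ∈ Finset.range (m+1),
      (i+1+1) * ((i+1+1)-1) * (m+2).choose (i+1+1) = (m+2)*(m+1) * m.choose i := by
    intro i _
    have e1 : (m+2) * (m+1).choose (i+1) = (m+2).choose (i+2) * (i+2) :=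
      Nat.add_one_mul_choose_eq (m+1) (i+1)
    have e2 : (m+1) * m.choose i = (m+1).choose (i+1) * (i+1) :=
      Nat.add_one_mul_choose_eq m i
    have : (i+1+1) * ((i+1+1)-1) * (m+2).choose (i+1+1)
        = (i+1) * ((m+2).choose (i+2) * (i+2)) := by
      have hd : (i+1+1) - 1 = i+1 := rfl
      rw [hd]; ring
    rw [this, ← e1]
    calc (i+1) * ((m+2) * (m+1).choose (i+1)) = (m+2) * ((m+1).choose (i+1) * (i+1)) := by ring
      _ = (m+2) * ((m+1) * m.choose i) := by rw [← e2]
      _ = (m+2)*(m+1) * m.choose i := by ring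
  rw [Finset.sum_congr rfl h1, ← Finset.mul_sum, Nat.sum_range_choose]
  simp

lemma sum_sq_choose (m : ℕ) :
    ∑ c ∈ Finset.range (m+3), c^2 * (m+2).choose c
      = (m+2)*(m+1)*2^m + (m+2)*2^(m+1) := by
  have h : ∀ c : ℕ, c^2 = c*(c-1) + c := by
    intro c
    cases c with
    | zero => rfl
    | succ c => have : c + 1 - 1 = c := rfl; rw [this]; ring
  calc ∑ c ∈ Finset.range (m+3), c^2 * (m+2).choose c
      = ∑ c ∈ Finset.range (m+3), (c*(c-1) * (m+2).choose c + c * (m+2).choose c) := by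
        refine Finset.sum_congr rfl fun c _ => ?_
        rw [h c, add_mul]
    _ = (m+2)*(m+1)*2^m + (m+2)*2^(m+1) := by
        rw [Finset.sum_add_distrib, sum_choose_mul2, sum_choose_mul (m+2)]
        rfl

/-- sums over the powerset of a function of the cardinality -/
lemma sum_powerset_card (s : Finset ι) (g : ℕ → ℝ) :
    ∑ B ∈ s.powerset, g B.card
      = ∑ c ∈ Finset.range (s.card+1), (s.card.choose c : ℝ) * g c := by
  classical
  have hmaps : ∀ B ∈ s.powerset, B.card ∈ Finset.range (s.card+1) := by
    intro B hB
    rw [Finset.mem_range]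
    exact Nat.lt_succ_of_le (card_le_card (mem_powerset.1 hB))
  rw [← Finset.sum_fiberwise_of_maps_to hmaps]
  refine Finset.sum_congr rfl fun c hc => ?_
  rw [Finset.sum_congr rfl (fun B hB => by rw [(mem_filter.1 hB).2]),
    Finset.sum_const]
  have hpc : (s.powerset.filter fun B => B.card = c) = s.powersetCard c := by
    rw [Finset.powersetCard_eq_filter]
  rw [hpc, Finset.card_powersetCard, nsmul_eq_mul]

lemma sum_choose_real (m : ℕ) :
    ∑ c ∈ Finset.range (m+1), (m.choose c : ℝ) = (2:ℝ)^m := by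
  rw [← Nat.cast_sum, Nat.sum_range_choose]
  push_cast
  ring

lemma sum_sq_choose_real (m : ℕ) (hm : 2 ≤ m) :
    ∑ c ∈ Finset.range (m+1), (m.choose c : ℝ) * (c:ℝ)^2
      = (m:ℝ)*((m:ℝ)-1)*(2:ℝ)^m/4 + (m:ℝ)*(2:ℝ)^m/2 := by
  obtain ⟨m2, rfl⟩ : ∃ m2, m = m2 + 2 := ⟨m - 2, by omega⟩
  have h := sum_sq_choose m2
  have hcast : ∑ c ∈ Finset.range (m2+3), ((m2+2).choose c : ℝ) * (c:ℝ)^2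
      = (((m2+2)*(m2+1)*2^m2 + (m2+2)*2^(m2+1) : ℕ) : ℝ) := by
    rw [← h, Nat.cast_sum]
    refine Finset.sum_congr rfl fun c _ => ?_
    push_cast
    ring
  rw [show m2 + 2 + 1 = m2 + 3 from rfl, hcast]
  push_cast
  rw [show (2:ℝ)^(m2+2) = (2:ℝ)^m2 * 4 by rw [pow_add]; norm_num,
    show (2:ℝ)^(m2+1) = (2:ℝ)^m2 * 2 by rw [pow_add]; norm_num]
  ring

lemma base_ineq (m : ℕ) (hm : 2 ≤ m) :
    ((2:ℝ)^m - (m:ℝ)) * (1/2:ℝ)^m ≤ 1/3 + (m:ℝ)^2 * (1/2:ℝ) / 9 := by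
  have hy : (2:ℝ)^m * (1/2:ℝ)^m = 1 := by rw [← mul_pow]; norm_num
  have hy0 : (0:ℝ) < (1/2:ℝ)^m := by positivity
  have h1 : ((2:ℝ)^m - (m:ℝ)) * (1/2:ℝ)^m = 1 - (m:ℝ) * (1/2:ℝ)^m := by
    rw [sub_mul, hy]
  rw [h1]
  rcases Nat.lt_or_ge m 4 with h | h
  · interval_cases m <;> norm_num
  · have hM4 : (4:ℝ) ≤ (m:ℝ) := by exact_mod_cast h
    nlinarith [mul_nonneg (by positivity : (0:ℝ) ≤ (m:ℝ)) hy0.le]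

lemma step_ineq (m : ℕ) (hm : 2 ≤ m) (x : ℝ) (hx : 0 ≤ x) :
    (1/2:ℝ)^m * ((2:ℝ)^m/3 + x/9*((m:ℝ)*((m:ℝ)-1)*(2:ℝ)^m/4 + (m:ℝ)*(2:ℝ)^m/2)
        + (m:ℝ)*(8*x/9 - 1/3) + 2/3)
      - (m:ℝ)*((1/2:ℝ)^m*(1/3 + ((m:ℝ)-1)^2*x/9 + (if m - 1 = 1 then 8*x/9 - 1/3 else 0)))
    ≤ 1/3 + (m:ℝ)^2*(1/2*x)/9 := by
  have hy : (1/2:ℝ)^m * (2:ℝ)^m = 1 := by rw [← mul_pow]; norm_num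
  have hy0 : (0:ℝ) < (1/2:ℝ)^m := by positivity
  rcases eq_or_lt_of_le hm with h2 | h3
  · -- m = 2
    rw [if_pos (by omega)]
    rw [← h2]
    norm_num
    nlinarith
  · -- m ≥ 3
    have hm3 : 3 ≤ m := h3
    rw [if_neg (by omega)]
    have hy8 : (1/2:ℝ)^m ≤ 1/8 := by
      calc (1/2:ℝ)^m ≤ (1/2:ℝ)^3 :=
        pow_le_pow_of_le_one (by norm_num) (by norm_num) hm3
      _ = 1/8 := by norm_num
    have hM : (3:ℝ) ≤ (m:ℝ) := by exact_mod_cast hm3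
    have key : (1/2:ℝ)^m * ((2:ℝ)^m/3 + x/9*((m:ℝ)*((m:ℝ)-1)*(2:ℝ)^m/4 + (m:ℝ)*(2:ℝ)^m/2)
          + (m:ℝ)*(8*x/9 - 1/3) + 2/3)
        - (m:ℝ)*((1/2:ℝ)^m*(1/3 + ((m:ℝ)-1)^2*x/9 + 0))
        = ((1/2:ℝ)^m * (2:ℝ)^m) * (1/3 + x/9*((m:ℝ)*((m:ℝ)-1)/4 + (m:ℝ)/2))
          + (1/2:ℝ)^m * ((m:ℝ)*(8*x/9 - 1/3) + 2/3 - (m:ℝ)*(1/3 + ((m:ℝ)-1)^2*x/9)) := by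
      ring
    rw [key, hy, one_mul]
    set y := (1/2:ℝ)^m with hydef
    set M := (m:ℝ) with hMdef
    -- need: 1/3 + x/9*(M(M-1)/4 + M/2) + y*(M(8x/9-1/3) + 2/3 - M(1/3+(M-1)^2 x/9))
    --        ≤ 1/3 + M^2 (x/2)/9
    rcases le_or_gt ((M-1)^2) 8 with hc | hc
    · nlinarith [mul_nonneg hx (by linarith : (0:ℝ) ≤ M),
        mul_le_mul_of_nonneg_right hy8
          (by nlinarith [mul_nonneg hx (by linarith : (0:ℝ) ≤ M)] :
            (0:ℝ) ≤ x*M*(8-(M-1)^2)/9),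
        mul_nonneg hy0.le (by linarith : (0:ℝ) ≤ M - 3),
        mul_nonneg (mul_nonneg hx (by linarith : (0:ℝ) ≤ M)) (by linarith : (0:ℝ) ≤ M - 3)]
    · nlinarith [mul_nonneg hx (by linarith : (0:ℝ) ≤ M),
        mul_nonpos_of_nonneg_of_nonpos (mul_nonneg hy0.le hx)
          (by nlinarith : (M*(8-(M-1)^2)/9 : ℝ) ≤ 0),
        mul_nonneg hy0.le (by linarith : (0:ℝ) ≤ M - 3),
        mul_nonneg (mul_nonneg hx (by linarith : (0:ℝ) ≤ M)) (by linarith : (0:ℝ) ≤ M - 3)]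

/-- The term-wise bound function. -/
noncomputable def beta (x : ℝ) (c : ℕ) : ℝ :=
  1/3 + (c:ℝ)^2*x/9 + (if c = 1 then 8*x/9 - 1/3 else 0) + (if c = 0 then 2/3 else 0)

lemma Sc_le_beta {j : ℕ} (hj : 1 ≤ j) (B : Finset ι)
    (ih : ∀ s : Finset ι, 2 ≤ s.card → Sc s j ≤ 1/3 + (s.card:ℝ)^2 * (1/2:ℝ)^j / 9) :
    Sc B j ≤ beta ((1/2:ℝ)^j) B.card := by
  have hx : (0:ℝ) ≤ (1/2:ℝ)^j := by positivity
  rcases Nat.lt_or_ge B.card 2 with h | h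
  · interval_cases hB : B.card
    · have hBe : B = ∅ := card_eq_zero.1 hB
      rw [hBe, Sc_empty, beta]
      norm_num
    · rw [Sc_card_one hB, beta]
      norm_num
      ring_nf
      nlinarith
  · have := ih B h
    rw [beta]
    have h1 : (if B.card = 1 then 8*(1/2:ℝ)^j/9 - 1/3 else 0) = 0 := if_neg (by omega)
    have h0 : (if B.card = 0 then (2/3:ℝ) else 0) = 0 := if_neg (by omega)
    rw [h1, h0]
    linarith

lemma Sc_bound (j : ℕ) (hj : 1 ≤ j) :
    ∀ s : Finset ι, 2 ≤ s.card →
      Sc s j ≤ 1/3 + (s.card:ℝ)^2 * (1/2:ℝ)^j / 9 := by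
  induction j, hj using Nat.le_induction with
  | base =>
    intro s hs
    set m := s.card with hm
    have h1 : Sc s 1 = ∑ B ∈ s.powerset,
        (if B.card + 1 = m then (0:ℝ) else (1/2:ℝ)^m) := by
      rw [Sc_succ]
      exact Finset.sum_congr rfl fun B _ => by rw [Sc_zero, mul_one]
    have h2 : (∑ B ∈ s.powerset, (if B.card + 1 = m then (0:ℝ) else (1/2:ℝ)^m))
        = ∑ c ∈ Finset.range (m+1), (m.choose c : ℝ) *
            (if c + 1 = m then (0:ℝ) else (1/2:ℝ)^m) :=
      sum_powerset_card s (fun c => if c + 1 = m then (0:ℝ) else (1/2:ℝ)^m)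
    have h3 : ∀ c ∈ Finset.range (m+1), (m.choose c : ℝ) *
          (if c + 1 = m then (0:ℝ) else (1/2:ℝ)^m)
        = (m.choose c : ℝ) * (1/2:ℝ)^m
          - (if c = m - 1 then (m.choose c : ℝ) * (1/2:ℝ)^m else 0) := by
      intro c _
      by_cases hc : c + 1 = m
      · rw [if_pos hc, if_pos (by omega)]
        ring
      · rw [if_neg hc, if_neg (by omega)]
        ring
    rw [h1, h2, Finset.sum_congr rfl h3, Finset.sum_sub_distrib,
      ← Finset.sum_mul, sum_choose_real,
      Finset.sum_ite_eq' (Finset.range (m+1)) (m-1)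
        (fun c => (m.choose c : ℝ) * (1/2:ℝ)^m),
      if_pos (by rw [Finset.mem_range]; omega)]
    have hch : (m.choose (m-1) : ℝ) = (m:ℝ) := by
      have h4 : m.choose (m-1) = m := by
        have h5 := Nat.choose_symm (show m - 1 ≤ m by omega) (n := m)
        rw [show m - (m-1) = 1 by omega] at h5
        rw [← h5, Nat.choose_one_right]
      rw [h4]
    rw [hch, ← sub_mul, pow_one]
    exact base_ineq m hs
  | succ j hj ih =>
    intro s hs
    set m := s.card with hm
    set x := ((1/2:ℝ)^j) with hx
    have hx0 : (0:ℝ) ≤ x := by positivity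
    calc Sc s (j+1)
        = ∑ B ∈ s.powerset,
            (if B.card + 1 = m then (0:ℝ) else (1/2:ℝ)^m * Sc B j) := Sc_succ s j
      _ ≤ ∑ B ∈ s.powerset,
            (if B.card + 1 = m then (0:ℝ) else (1/2:ℝ)^m * beta x B.card) := by
          refine Finset.sum_le_sum fun B _ => ?_
          by_cases hc : B.card + 1 = m
          · rw [if_pos hc, if_pos hc]
          · rw [if_neg hc, if_neg hc]
            have hb := Sc_le_beta hj B ih
            have hy0 : (0:ℝ) ≤ (1/2:ℝ)^m := by positivity
            exact mul_le_mul_of_nonneg_left hb hy0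
      _ = ∑ c ∈ Finset.range (m+1), (m.choose c : ℝ) *
            (if c + 1 = m then (0:ℝ) else (1/2:ℝ)^m * beta x c) :=
          sum_powerset_card s (fun c => if c + 1 = m then (0:ℝ) else (1/2:ℝ)^m * beta x c)
      _ = (∑ c ∈ Finset.range (m+1), (m.choose c : ℝ) * ((1/2:ℝ)^m * beta x c))
          - (m:ℝ) * ((1/2:ℝ)^m * beta x (m-1)) := by
          have h3 : ∀ c ∈ Finset.range (m+1), (m.choose c : ℝ) *
                (if c + 1 = m then (0:ℝ) else (1/2:ℝ)^m * beta x c)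
              = (m.choose c : ℝ) * ((1/2:ℝ)^m * beta x c)
                - (if c = m - 1 then (m.choose c : ℝ) * ((1/2:ℝ)^m * beta x c) else 0) := by
            intro c _
            by_cases hc : c + 1 = m
            · rw [if_pos hc, if_pos (by omega)]; ring
            · rw [if_neg hc, if_neg (by omega)]; ring
          rw [Finset.sum_congr rfl h3, Finset.sum_sub_distrib,
            Finset.sum_ite_eq' (Finset.range (m+1)) (m-1)
              (fun c => (m.choose c : ℝ) * ((1/2:ℝ)^m * beta x c)),
            if_pos (by rw [Finset.mem_range]; omega)]
          have h4 : m.choose (m-1) = m := by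
            have h5 := Nat.choose_symm (show m - 1 ≤ m by omega) (n := m)
            rw [show m - (m-1) = 1 by omega] at h5
            rw [← h5, Nat.choose_one_right]
          rw [h4]
      _ ≤ 1/3 + (m:ℝ)^2 * (1/2:ℝ)^(j+1) / 9 := by
          have hsum : ∑ c ∈ Finset.range (m+1), (m.choose c : ℝ) * ((1/2:ℝ)^m * beta x c)
              = (1/2:ℝ)^m * ((2:ℝ)^m/3
                  + x/9*((m:ℝ)*((m:ℝ)-1)*(2:ℝ)^m/4 + (m:ℝ)*(2:ℝ)^m/2)
                  + (m:ℝ)*(8*x/9 - 1/3) + 2/3) := by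
            have hexp : ∀ c ∈ Finset.range (m+1), (m.choose c : ℝ) * ((1/2:ℝ)^m * beta x c)
                = (1/2:ℝ)^m * ((m.choose c : ℝ) * (1/3)
                    + ((m.choose c : ℝ) * (c:ℝ)^2) * (x/9)
                    + (if c = 1 then (m.choose c : ℝ) * (8*x/9 - 1/3) else 0)
                    + (if c = 0 then (m.choose c : ℝ) * (2/3) else 0)) := by
              intro c _
              rw [beta]
              by_cases hc1 : c = 1 <;> by_cases hc0 : c = 0 <;>
                simp only [hc1, hc0, if_pos, if_neg, if_true, if_false] <;>
                first
                | omega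
                | (norm_num; try ring)
            rw [Finset.sum_congr rfl hexp, ← Finset.mul_sum]
            congr 1
            rw [Finset.sum_add_distrib, Finset.sum_add_distrib, Finset.sum_add_distrib,
              Finset.sum_ite_eq' (Finset.range (m+1)) 1,
              Finset.sum_ite_eq' (Finset.range (m+1)) 0,
              if_pos (by rw [Finset.mem_range]; omega),
              if_pos (by rw [Finset.mem_range]; omega),
              ← Finset.sum_mul, sum_choose_real, ← Finset.sum_mul,
              sum_sq_choose_real m hs, Nat.choose_one_right, Nat.choose_zero_right]
            push_cast
            ring
          rw [hsum]
          have hb : beta x (m-1) = 1/3 + ((m:ℝ)-1)^2*x/9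
              + (if m - 1 = 1 then 8*x/9 - 1/3 else 0) := by
            rw [beta]
            have hne : ¬ (m - 1 = 0) := by omega
            rw [if_neg hne, add_zero]
            have hcast : ((m-1 : ℕ) : ℝ) = (m:ℝ) - 1 := by
              push_cast [Nat.cast_sub (by omega : 1 ≤ m)]
              ring
            rw [hcast]
          rw [hb]
          have := step_ineq m hs x hx0
          calc _ ≤ 1/3 + (m:ℝ)^2*(1/2*x)/9 := this
            _ = 1/3 + (m:ℝ)^2 * (1/2:ℝ)^(j+1) / 9 := by
                rw [hx, pow_succ]
                ring

lemma ofReal_prod {α : Type*} (s : Finset α) (f : α → ℝ) (h : ∀ i ∈ s, 0 ≤ f i) :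
    ENNReal.ofReal (∏ i ∈ s, f i) = ∏ i ∈ s, ENNReal.ofReal (f i) := by
  classical
  induction s using Finset.cons_induction with
  | empty => simp
  | cons a s ha ih =>
    rw [Finset.prod_cons, Finset.prod_cons,
      ENNReal.ofReal_mul (h a (Finset.mem_cons_self a s)),
      ih (fun i hi => h i (Finset.mem_cons_of_mem hi))]

end GreenDecayAux

end GreenDecayAux

open MeasureTheory ProbabilityTheory

open GreenDecayAux

/-- Theorem 2, part 2: if `G₁, …, Gₙ` (`n ≥ 2`) are independent
geometric random variables with parameter `1/2` (`P(Gᵢ = t) = 2^(−t)` for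
integers `t ≥ 1`), then for every integer `k ≥ 2·log n` (log base 2), with
probability strictly greater than `1/2` some integer `1 ≤ t ≤ k` is attained
by exactly one of the variables. -/
theorem green_decay_finite (n : ℕ) (hn : 2 ≤ n)
    (Ω : Type*) [MeasurableSpace Ω] (μ : Measure Ω) [IsProbabilityMeasure μ]
    (G : Fin n → Ω → ℕ) (hmeas : ∀ i, Measurable (G i))
    (hind : iIndepFun G μ)
    (hgeom : ∀ (i : Fin n) (t : ℕ), 1 ≤ t →
      μ {ω | G i ω = t} = (2 : ENNReal)⁻¹ ^ t)
    (k : ℕ) (hk : 2 * Real.logb 2 n ≤ (k : ℝ)) :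
    1 / 2 < μ {ω | ∃ t : ℕ, 1 ≤ t ∧ t ≤ k ∧ ∃! i : Fin n, G i ω = t} := by
  classical
  have hmN : ∀ A : Set ℕ, MeasurableSet A := fun A => MeasurableSet.of_discrete
  -- k is at least 2
  have hn2 : (2:ℝ) ≤ (n:ℝ) := by exact_mod_cast hn
  have hlogb : 1 ≤ Real.logb 2 n := by
    rw [show (1:ℝ) = Real.logb 2 2 by rw [Real.logb_self_eq_one] <;> norm_num]
    exact Real.logb_le_logb_of_le (by norm_num) (by norm_num) hn2
  have hk2 : 2 ≤ k := by
    have h1 : (2:ℝ) ≤ (k:ℝ) := le_trans (by linarith) hk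
    exact_mod_cast h1
  -- the power bound
  have hpow : (n:ℝ)^2 * (1/2:ℝ)^k ≤ 1 := by
    have h1 : (n:ℝ) = (2:ℝ) ^ (Real.logb 2 n) :=
      (Real.rpow_logb (by norm_num) (by norm_num) (by positivity)).symm
    have h2 : (n:ℝ)^2 = (2:ℝ) ^ (2 * Real.logb 2 n) := by
      rw [h1, ← Real.rpow_natCast ((2:ℝ) ^ Real.logb 2 n) 2,
        ← Real.rpow_mul (by norm_num), mul_comm]
      norm_num
    have h3 : (n:ℝ)^2 ≤ (2:ℝ)^(k:ℝ) := by
      rw [h2]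
      exact Real.rpow_le_rpow_left_iff (by norm_num) |>.2 hk
    rw [Real.rpow_natCast] at h3
    have h4 : (0:ℝ) < (2:ℝ)^k := by positivity
    have h5 : (1/2:ℝ)^k = ((2:ℝ)^k)⁻¹ := by
      rw [one_div, inv_pow]
    rw [h5]
    calc (n:ℝ)^2 * ((2:ℝ)^k)⁻¹ ≤ (2:ℝ)^k * ((2:ℝ)^k)⁻¹ :=
        mul_le_mul_of_nonneg_right h3 (by positivity)
      _ = 1 := mul_inv_cancel₀ (ne_of_gt h4)
  -- basic geometric computations
  have hUnion : ∀ (i : Fin n) (a : ℕ), μ (⋃ t : ℕ, {ω | G i ω = t + (a+1)}) = 2⁻¹ ^ a := by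
    intro i a
    rw [measure_iUnion]
    · have hc : ∀ t : ℕ, μ {ω | G i ω = t + (a+1)} = (2:ENNReal)⁻¹ ^ (t + (a+1)) :=
        fun t => hgeom i (t + (a+1)) (by omega)
      rw [tsum_congr hc]
      have hpowsplit : ∀ t : ℕ, (2:ENNReal)⁻¹ ^ (t + (a+1)) = 2⁻¹ ^ (a+1) * 2⁻¹ ^ t := by
        intro t; rw [pow_add]; ring
      rw [tsum_congr hpowsplit, ENNReal.tsum_mul_left, ENNReal.tsum_geometric,
        ENNReal.one_sub_inv_two, pow_succ]
      rw [mul_assoc, ENNReal.mul_inv_cancel (by simp) (by simp), mul_one]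
    · intro t1 t2 hne
      simp only [Function.onFun, Set.disjoint_left]
      intro ω h1 h2
      simp only [Set.mem_setOf_eq] at h1 h2
      omega
    · intro t
      exact hmeas i (hmN {x | x = t + (a+1)})
  have hzero : ∀ i, μ {ω | G i ω = 0} = 0 := by
    intro i
    have hsub : {ω | G i ω = 0} ⊆ (⋃ t : ℕ, {ω | G i ω = t + (0+1)})ᶜ := by
      intro ω h
      simp only [Set.mem_setOf_eq] at h
      simp only [Set.mem_compl_iff, Set.mem_iUnion, Set.mem_setOf_eq]
      push_neg
      intro t
      omega
    have hcm : MeasurableSet (⋃ t : ℕ, {ω | G i ω = t + (0+1)}) :=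
      MeasurableSet.iUnion fun t => hmeas i (hmN {x | x = t + (0+1)})
    have hc : μ ((⋃ t : ℕ, {ω | G i ω = t + (0+1)})ᶜ) = 0 := by
      rw [measure_compl hcm (measure_ne_top μ _), hUnion i 0]
      simp
    exact le_antisymm (le_trans (measure_mono hsub) hc.le) zero_le
  have htail : ∀ i, μ {ω | k + 1 ≤ G i ω} = 2⁻¹ ^ k := by
    intro i
    have he : {ω | k + 1 ≤ G i ω} = ⋃ t : ℕ, {ω | G i ω = t + (k+1)} := by
      ext ω
      simp only [Set.mem_setOf_eq, Set.mem_iUnion]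
      constructor
      · intro h; exact ⟨G i ω - (k+1), by omega⟩
      · rintro ⟨t, ht⟩; omega
    rw [he, hUnion i k]
  -- the per-level sets
  set Tset : ℕ → Set ℕ := fun t => if t ≤ k then {t} else {x | k+1 ≤ x} with hTset
  set Ew : (Fin n → ℕ) → Set Ω := fun w => ⋂ i, G i ⁻¹' Tset (w i) with hEw
  -- factor values
  have hfac : ∀ (i : Fin n) (t : ℕ), 1 ≤ t → t ≤ k + 1 →
      μ (G i ⁻¹' Tset t) = ENNReal.ofReal (q k t) := by
    intro i t h1 h2
    have h12 : ENNReal.ofReal (1/2 : ℝ) = 2⁻¹ := by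
      rw [ENNReal.ofReal_div_of_pos (by norm_num)]
      norm_num
    by_cases ht : t ≤ k
    · have hpre : G i ⁻¹' Tset t = {ω | G i ω = t} := by
        rw [hTset]
        simp only [if_pos ht]
        ext ω
        simp [Set.mem_preimage]
      rw [hpre, hgeom i t h1, q, if_pos ht, ENNReal.ofReal_pow (by norm_num), h12]
    · have hpre : G i ⁻¹' Tset t = {ω | k + 1 ≤ G i ω} := by
        rw [hTset]
        simp only [if_neg ht]
        ext ω
        simp [Set.mem_preimage]
      rw [hpre, htail i, q, if_neg ht, ENNReal.ofReal_pow (by norm_num), h12]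
  -- product formula
  have hprod : ∀ w ∈ WF (Finset.univ : Finset (Fin n)) k,
      μ (Ew w) = ENNReal.ofReal (∏ i ∈ Finset.univ, q k (w i)) := by
    intro w hw
    obtain ⟨hmem, hbad⟩ := mem_WF.1 hw
    have h1 : μ (Ew w) = ∏ i ∈ Finset.univ, μ (G i ⁻¹' Tset (w i)) := by
      simp only [hEw]
      have h2 : (⋂ i, G i ⁻¹' Tset (w i)) = ⋂ i ∈ Finset.univ, G i ⁻¹' Tset (w i) := by
        simp
      rw [h2]
      exact hind.measure_inter_preimage_eq_mul Finset.univ (fun i _ => hmN _)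
    rw [h1, ofReal_prod _ _ (fun i _ => q_nonneg k (w i))]
    refine Finset.prod_congr rfl fun i _ => ?_
    have h3 := (hmem i).1 (Finset.mem_univ i)
    rw [Finset.mem_Icc] at h3
    exact hfac i (w i) h3.1 h3.2
  -- cover
  set S : Set Ω := {ω | ∃ t : ℕ, 1 ≤ t ∧ t ≤ k ∧ ∃! i : Fin n, G i ω = t} with hSdef
  set N : Set Ω := ⋃ i : Fin n, {ω | G i ω = 0} with hNdef
  set Bc : Set Ω := ⋃ w ∈ WF (Finset.univ : Finset (Fin n)) k, Ew w with hBdef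
  have hCsub : (N ∪ Bc)ᶜ ⊆ S := by
    intro ω hω
    rw [Set.mem_compl_iff, Set.mem_union] at hω
    push_neg at hω
    obtain ⟨hωN, hωB⟩ := hω
    have hne0 : ∀ i, 1 ≤ G i ω := by
      intro i
      by_contra h
      exact hωN (Set.mem_iUnion.2 ⟨i, by simp only [Set.mem_setOf_eq]; omega⟩)
    by_contra hnS
    rw [hSdef] at hnS
    simp only [Set.mem_setOf_eq] at hnS
    push_neg at hnS
    set w0 : Fin n → ℕ := fun i => min (G i ω) (k+1) with hw0
    have hw0mem : w0 ∈ WF (Finset.univ : Finset (Fin n)) k := by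
      refine mem_WF.2 ⟨fun i => ⟨fun _ => ?_, fun hi => absurd (Finset.mem_univ i) hi⟩, ?_⟩
      · rw [Finset.mem_Icc]
        simp only [hw0]
        have := hne0 i
        omega
      · intro t ht hcard
        rw [Finset.mem_Icc] at ht
        obtain ⟨a, ha⟩ := Finset.card_eq_one.1 hcard
        refine hnS t ht.1 ht.2 ⟨a, ?_, ?_⟩
        · have haf : a ∈ Finset.univ.filter fun i => w0 i = t := by
            rw [ha]; exact Finset.mem_singleton_self a
          have h6 := (Finset.mem_filter.1 haf).2
          simp only [hw0] at h6
          omega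
        · intro y hy
          have hyf : y ∈ Finset.univ.filter fun i => w0 i = t := by
            rw [Finset.mem_filter]
            refine ⟨Finset.mem_univ y, ?_⟩
            simp only [hw0]
            omega
          rw [ha, Finset.mem_singleton] at hyf
          exact hyf
    have hωEw : ω ∈ Ew w0 := by
      simp only [hEw]
      refine Set.mem_iInter.2 fun i => ?_
      rw [Set.mem_preimage]
      simp only [hTset, hw0]
      by_cases hgk : G i ω ≤ k
      · rw [show min (G i ω) (k+1) = G i ω by omega, if_pos hgk]
        rfl
      · rw [show min (G i ω) (k+1) = k+1 by omega, if_neg (by omega)]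
        simp only [Set.mem_setOf_eq]
        omega
    exact hωB (Set.mem_biUnion hw0mem hωEw)
  -- measures
  have hNmeas : μ N = 0 := by
    refine le_antisymm (le_trans (measure_iUnion_le _) ?_) zero_le
    rw [tsum_congr (fun i => hzero i)]
    simp
  have hBmeas : μ Bc ≤ ENNReal.ofReal (4/9 : ℝ) := by
    calc μ Bc ≤ ∑ w ∈ WF (Finset.univ : Finset (Fin n)) k, μ (Ew w) :=
        measure_biUnion_finset_le _ _
      _ = ∑ w ∈ WF (Finset.univ : Finset (Fin n)) k,
            ENNReal.ofReal (∏ i ∈ Finset.univ, q k (w i)) :=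
        Finset.sum_congr rfl hprod
      _ = ENNReal.ofReal (Sc (Finset.univ : Finset (Fin n)) k) := by
        rw [Sc, ENNReal.ofReal_sum_of_nonneg
          (fun w _ => Finset.prod_nonneg fun i _ => q_nonneg k (w i))]
      _ ≤ ENNReal.ofReal (4/9 : ℝ) := by
        refine ENNReal.ofReal_le_ofReal ?_
        have hcard : (Finset.univ : Finset (Fin n)).card = n := by
          rw [Finset.card_univ, Fintype.card_fin]
        have hb := Sc_bound k (by omega) (Finset.univ : Finset (Fin n)) (by rw [hcard]; exact hn)
        rw [hcard] at hb
        nlinarith [hb, hpow]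
  have hCmeas : MeasurableSet (N ∪ Bc) := by
    refine MeasurableSet.union ?_ ?_
    · exact MeasurableSet.iUnion fun i => hmeas i (hmN {x | x = 0})
    · refine Finset.measurableSet_biUnion _ fun w _ => ?_
      exact MeasurableSet.iInter fun i => hmeas i (hmN (Tset (w i)))
  have hmain : 1 - ENNReal.ofReal (4/9 : ℝ) ≤ μ S := by
    calc 1 - ENNReal.ofReal (4/9 : ℝ)
        ≤ 1 - μ (N ∪ Bc) := by
          refine tsub_le_tsub_left ?_ 1
          calc μ (N ∪ Bc) ≤ μ N + μ Bc := measure_union_le _ _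
            _ ≤ ENNReal.ofReal (4/9 : ℝ) := by rw [hNmeas, zero_add]; exact hBmeas
      _ = μ ((N ∪ Bc)ᶜ) := by
          rw [measure_compl hCmeas (measure_ne_top μ _), measure_univ]
      _ ≤ μ S := measure_mono hCsub
  refine lt_of_lt_of_le ?_ hmain
  have h1 : (1 : ENNReal) - ENNReal.ofReal (4/9 : ℝ) = ENNReal.ofReal (5/9 : ℝ) := by
    rw [← ENNReal.ofReal_one, ← ENNReal.ofReal_sub _ (by norm_num)]
    norm_num
  have h2 : (1/2 : ENNReal) = ENNReal.ofReal (1/2 : ℝ) := by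
    rw [ENNReal.ofReal_div_of_pos (by norm_num)]
    norm_num
  rw [h1, h2]
  exact (ENNReal.ofReal_lt_ofReal_iff (by norm_num)).2 (by norm_num)
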